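/- Let θ be irrational, A_θ the irrational rotation algebra with generators u, v (uv = e^{2πiθ}vu), τ its unique trace, and π the GNS representation on L²(A_θ, τ). Let a ∈ π(A_θ)'' be a self-adjoint operator generating the same von Neumann algebra as π(u) (i.e., {a}'' = {π(u), π(u)*}''), and let b be a non-scalar self-adjoint element of {π(v), π(v)*}''. Then a + i b is irreducible in the factor π(A_θ)'': every projection p ∈ π(A_θ)'' commuting with a + ib is 0 or I. -/

import Mathlib

open ContinuousLinearMap
open scoped InnerProductSpace Real

noncomputable section

namespace Stmt

variable {H : Type} [NormedAddCommGroup H] [InnerProductSpace ℂ H] [CompleteSpace H]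

/-- The commutant of a set of bounded operators. -/
def comm (S : Set (H →L[ℂ] H)) : Set (H →L[ℂ] H) := {y | ∀ x ∈ S, x * y = y * x}

/-- An orthogonal projection. -/
def IsProjection (p : H →L[ℂ] H) : Prop := IsSelfAdjoint p ∧ p * p = p

end Stmt

namespace RotAux

open Stmt

variable {H : Type} [NormedAddCommGroup H] [InnerProductSpace ℂ H] [CompleteSpace H]

lemma subset_comm_comm (S : Set (H →L[ℂ] H)) : S ⊆ comm (comm S) :=
  fun x hx y hy => (hy x hx).symm

lemma comm_anti {S T : Set (H →L[ℂ] H)} (h : S ⊆ T) : comm T ⊆ comm S :=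
  fun y hy x hx => hy x (h hx)

lemma comm_comm_comm (S : Set (H →L[ℂ] H)) : comm (comm (comm S)) = comm S :=
  Set.Subset.antisymm (comm_anti (subset_comm_comm S)) (subset_comm_comm (comm S))

lemma eq_zero_of_inner_basis {ι : Type*} (hb : HilbertBasis ι ℂ H) {x : H}
    (h : ∀ i, ⟪hb i, x⟫_ℂ = 0) : x = 0 := by
  have h2 := hb.tsum_inner_mul_inner x x
  have h3 : ∀ i, ⟪x, hb i⟫_ℂ * ⟪hb i, x⟫_ℂ = 0 := by
    intro i; rw [h i, mul_zero]
  rw [tsum_congr h3, tsum_zero] at h2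
  exact inner_self_eq_zero.mp h2.symm

lemma ext_of_inner_basis {ι : Type*} (hb : HilbertBasis ι ℂ H) {x y : H →L[ℂ] H}
    (h : ∀ i j, ⟪hb j, x (hb i)⟫_ℂ = ⟪hb j, y (hb i)⟫_ℂ) : x = y := by
  have hbdense : Dense (Submodule.span ℂ (Set.range ⇑hb) : Set H) :=
    Submodule.dense_iff_topologicalClosure_eq_top.mpr hb.dense_span
  apply ContinuousLinearMap.ext_on hbdense
  rintro _ ⟨i, rfl⟩
  have hz : x (hb i) - y (hb i) = 0 := by
    apply eq_zero_of_inner_basis hb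
    intro j
    rw [inner_sub_right, h i j, sub_self]
  have := sub_eq_zero.mp hz
  exact this

lemma exists_basis_unitary {ι : Type*} (hb : HilbertBasis ι ℂ H) (σ : Equiv.Perm ι)
    (c : ι → ℂ) (hc : ∀ i, ‖c i‖ = 1) :
    ∃ T : H →L[ℂ] H, (∀ i, T (hb i) = c i • hb (σ i)) ∧
      (∀ x y : H, ⟪T x, T y⟫_ℂ = ⟪x, y⟫_ℂ) := by
  classical
  have hc0 : ∀ i, c i ≠ 0 := fun i => by
    intro h0; have := hc i; rw [h0, norm_zero] at this; norm_num at this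
  set f : ι → H := fun i => c i • hb (σ i) with hf
  have hon : Orthonormal ℂ f := by
    rw [orthonormal_iff_ite]
    intro i j
    have hbon := orthonormal_iff_ite.mp hb.orthonormal (σ i) (σ j)
    simp only [hf, inner_smul_left, inner_smul_right, hbon, σ.injective.eq_iff]
    by_cases hij : i = j
    · subst hij
      simp only [if_pos rfl, mul_one]
      have h4 : c i * (starRingEnd ℂ) (c i) = 1 := by
        rw [Complex.mul_conj]
        rw [Complex.normSq_eq_norm_sq, hc i]
        norm_num
      simp [h4]
    · simp [hij]
  have hbdense : Dense (Submodule.span ℂ (Set.range ⇑hb) : Set H) :=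
    Submodule.dense_iff_topologicalClosure_eq_top.mpr hb.dense_span
  have hdense : Dense (Submodule.span ℂ (Set.range f) : Set H) := by
    apply hbdense.mono
    apply Submodule.span_le.mpr
    rintro _ ⟨j, rfl⟩
    have : hb j = (c (σ.symm j))⁻¹ • f (σ.symm j) := by
      simp only [hf, Equiv.apply_symm_apply, smul_smul,
        inv_mul_cancel₀ (hc0 (σ.symm j)), one_smul]
    rw [this]
    exact Submodule.smul_mem _ _ (Submodule.subset_span ⟨σ.symm j, rfl⟩)
  have hsp : ⊤ ≤ (Submodule.span ℂ (Set.range f)).topologicalClosure :=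
    le_of_eq (Submodule.dense_iff_topologicalClosure_eq_top.mp hdense).symm
  set hb' : HilbertBasis ι ℂ H := HilbertBasis.mk hon hsp with hhb'
  have hcoe : ∀ i, hb' i = f i := by
    intro i; rw [hhb']; rw [HilbertBasis.coe_mk]
  set T0 : H ≃ₗᵢ[ℂ] H := hb.repr.trans hb'.repr.symm with hT0
  refine ⟨(T0.toContinuousLinearEquiv : H →L[ℂ] H), ?_, ?_⟩
  · intro i
    have h1 : T0 (hb i) = hb' i := by
      rw [hT0]
      simp only [LinearIsometryEquiv.trans_apply, hb.repr_self, hb'.repr_symm_single]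
    show T0.toContinuousLinearEquiv (hb i) = c i • hb (σ i)
    rw [show ⇑T0.toContinuousLinearEquiv = ⇑T0 from LinearIsometryEquiv.coe_toContinuousLinearEquiv T0]
    rw [h1, hcoe i]
  · intro x y
    show ⟪T0.toContinuousLinearEquiv x, T0.toContinuousLinearEquiv y⟫_ℂ = ⟪x, y⟫_ℂ
    rw [LinearIsometryEquiv.coe_toContinuousLinearEquiv]
    exact T0.inner_map_map x y


/-- The phase `e^{2πiθt}`. -/
def μf (θ : ℝ) (t : ℤ) : ℂ := Complex.exp ((2 * π * θ * t : ℝ) * Complex.I)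

lemma μf_zero (θ : ℝ) : μf θ 0 = 1 := by simp [μf]

lemma μf_add (θ : ℝ) (s t : ℤ) : μf θ (s + t) = μf θ s * μf θ t := by
  rw [μf, μf, μf, ← Complex.exp_add]
  congr 1
  push_cast
  ring

lemma μf_mul_neg (θ : ℝ) (t : ℤ) : μf θ t * μf θ (-t) = 1 := by
  rw [← μf_add, add_neg_cancel, μf_zero]

lemma μf_norm (θ : ℝ) (t : ℤ) : ‖μf θ t‖ = 1 := Complex.norm_exp_ofReal_mul_I _

lemma μf_ne_zero (θ : ℝ) (t : ℤ) : μf θ t ≠ 0 := Complex.exp_ne_zero _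

lemma μf_conj (θ : ℝ) (t : ℤ) : (starRingEnd ℂ) (μf θ t) = μf θ (-t) := by
  rw [μf, μf, ← Complex.exp_conj]
  congr 1
  rw [map_mul, Complex.conj_ofReal, Complex.conj_I]
  push_cast
  ring

lemma μf_ne_one {θ : ℝ} (hθ : Irrational θ) {t : ℤ} (ht : t ≠ 0) : μf θ t ≠ 1 := by
  intro h
  rw [μf, Complex.exp_eq_one_iff] at h
  obtain ⟨n, hn⟩ := h
  have hI : (Complex.I : ℂ) ≠ 0 := Complex.I_ne_zero
  have e1 : ((2 * π * θ * t : ℝ) : ℂ) * Complex.I = ((n * (2 * π) : ℝ) : ℂ) * Complex.I := by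
    push_cast at hn ⊢
    linear_combination hn
  have h3 : 2 * π * θ * t = n * (2 * π) := Complex.ofReal_inj.mp (mul_right_cancel₀ hI e1)
  have hπ : (π : ℝ) ≠ 0 := Real.pi_ne_zero
  have h4 : θ * t = n := by
    have : (2 * π) * (θ * t) = (2 * π) * (n : ℝ) := by ring_nf; ring_nf at h3; linarith
    exact mul_left_cancel₀ (by positivity) this
  have ht' : (t : ℝ) ≠ 0 := Int.cast_ne_zero.mpr ht
  have : θ = ((n / t : ℚ) : ℝ) := by
    push_cast
    field_simp
    linarith [h4]
  exact hθ ⟨(n / t : ℚ), this.symm⟩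

lemma int_invariant {F : ℤ → ℂ} (h : ∀ t, F (t + 1) = F t) : ∀ d, F d = F 0 := by
  intro d
  induction d using Int.induction_on with
  | zero => rfl
  | succ k ih => rw [h k, ih]
  | pred k ih =>
    have h3 : F (-(k:ℤ)) = F (-(k:ℤ) - 1) := by
      have := h (-(k:ℤ) - 1)
      rwa [show (-(k:ℤ) - 1 + 1) = -(k:ℤ) by ring] at this
    rw [← h3]
    exact ih

lemma int_shift_mu (θ : ℝ) {s : ℤ} {F : ℤ → ℂ} (h : ∀ t, F (t + 1) = μf θ s * F t) :
    ∀ d, F d = μf θ (s * d) * F 0 := by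
  have key : ∀ t, (fun t => μf θ (-(s * t)) * F t) (t + 1) = (fun t => μf θ (-(s * t)) * F t) t := by
    intro t
    simp only
    rw [h t, ← mul_assoc]
    congr 1
    rw [← μf_add]
    congr 1
    ring
  intro d
  have h2 := int_invariant (F := fun t => μf θ (-(s * t)) * F t) key d
  have h3 : μf θ (s * d) * (μf θ (-(s * d)) * F d)
      = μf θ (s * d) * (μf θ (-(s * 0)) * F 0) := by rw [h2]
  rw [← mul_assoc, μf_mul_neg, one_mul] at h3
  rw [mul_zero, neg_zero, μf_zero, one_mul] at h3
  exact h3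

end RotAux

open RotAux

open Stmt in
set_option maxHeartbeats 2000000 in
/-- Let `π` be the GNS representation of the irrational rotation algebra
`A_θ` with respect to its unique trace, realized on `H = L²(A_θ, τ)` with cyclic trace
vector `ξ` for which the monomials `π(u)^m π(v)^n ξ` form an orthonormal basis, and let
`M = π(A_θ)''`. If `a ∈ M` is self-adjoint with `{a}'' = {π(u), π(u)*}''` and `b` is a
non-scalar self-adjoint element of `{π(v), π(v)*}''`, then `a + i b` is irreducible in
`M`: every projection `p ∈ M` commuting with `a + ib` is `0` or `1`. -/
theorem rotation_algebra_sum_irreducible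
    {H : Type} [NormedAddCommGroup H] [InnerProductSpace ℂ H] [CompleteSpace H]
    [TopologicalSpace.SeparableSpace H]
    (θ : ℝ) (hθ : Irrational θ)
    (U V : unitary (H →L[ℂ] H))
    (hcomm : (U : H →L[ℂ] H) * V = Complex.exp (2 * π * Complex.I * θ) •
      ((V : H →L[ℂ] H) * U))
    (M : VonNeumannAlgebra H)
    (hMgen : (M : Set (H →L[ℂ] H)) =
      comm (comm {(U : H →L[ℂ] H), (V : H →L[ℂ] H),
        star (U : H →L[ℂ] H), star (V : H →L[ℂ] H)}))
    (ξ : H) (hξ : ‖ξ‖ = 1)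
    (honb : Orthonormal ℂ (fun mn : ℤ × ℤ =>
      (((U ^ mn.1) * (V ^ mn.2) : unitary (H →L[ℂ] H)) : H →L[ℂ] H) ξ))
    (htotal : Dense (Submodule.span ℂ (Set.range (fun mn : ℤ × ℤ =>
      (((U ^ mn.1) * (V ^ mn.2) : unitary (H →L[ℂ] H)) : H →L[ℂ] H) ξ)) : Set H))
    (a : H →L[ℂ] H) (haSA : IsSelfAdjoint a)
    (ha : comm (comm {a}) =
      comm (comm {(U : H →L[ℂ] H), star (U : H →L[ℂ] H)}))
    (b : H →L[ℂ] H) (hbSA : IsSelfAdjoint b)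
    (hb : b ∈ comm (comm {(V : H →L[ℂ] H), star (V : H →L[ℂ] H)}))
    (hbns : ¬ ∃ c : ℂ, b = c • (1 : H →L[ℂ] H)) :
    ∀ p ∈ M, IsProjection p →
      p * (a + Complex.I • b) = (a + Complex.I • b) * p → p = 0 ∨ p = 1 := by
  intro p hpMem hproj hpcomm
  classical
  obtain ⟨hpSA, hpidem⟩ := hproj
  set u : H →L[ℂ] H := (U : H →L[ℂ] H) with hu
  set v : H →L[ℂ] H := (V : H →L[ℂ] H) with hv
  set e : ℤ × ℤ → H := fun mn : ℤ × ℤ =>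
      (((U ^ mn.1) * (V ^ mn.2) : unitary (H →L[ℂ] H)) : H →L[ℂ] H) ξ with he
  -- ## Step 0: p commutes with a and with b separately
  have h1 : p * a + Complex.I • (p * b) = a * p + Complex.I • (b * p) := by
    have h := hpcomm
    rw [mul_add, add_mul, mul_smul_comm, smul_mul_assoc] at h
    exact h
  have h2 : a * p - Complex.I • (b * p) = p * a - Complex.I • (p * b) := by
    have h := congrArg star hpcomm
    rw [star_mul, star_mul, star_add, star_smul, hpSA.star_eq, haSA.star_eq,
      hbSA.star_eq, Complex.star_def, Complex.conj_I] at h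
    -- h : (a + (-I) • b) * p = p * (a + (-I) • b)
    rw [add_mul, mul_add, smul_mul_assoc, mul_smul_comm, neg_smul, neg_smul] at h
    -- h : a * p + -(I • (b * p)) = p * a + -(I • (p * b))
    rw [← sub_eq_add_neg, ← sub_eq_add_neg] at h
    exact h
  have k1 : p * a - a * p = Complex.I • (b * p) - Complex.I • (p * b) :=
    sub_eq_sub_iff_add_eq_add.mpr (h1.trans (add_comm _ _))
  have k2 : a * p - p * a = Complex.I • (b * p) - Complex.I • (p * b) :=
    sub_eq_sub_iff_add_eq_add.mpr ((sub_eq_sub_iff_add_eq_add.mp h2).trans (add_comm _ _))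
  have k4 : (p * a - a * p) + (p * a - a * p) = 0 := by
    nth_rewrite 2 [k1.trans k2.symm]
    rw [sub_add_sub_cancel, sub_self]
  have hx0 : p * a - a * p = 0 := by
    have h2smul : (2 : ℂ) • (p * a - a * p) = 0 := by rw [two_smul]; exact k4
    rcases smul_eq_zero.mp h2smul with h | h
    · norm_num at h
    · exact h
  have hpa : p * a = a * p := sub_eq_zero.mp hx0
  have hpb : p * b = b * p := by
    have : Complex.I • (b * p - p * b) = 0 := by
      rw [smul_sub, ← k1, hx0]
    rcases smul_eq_zero.mp this with h | h
    · exact absurd h Complex.I_ne_zero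
    · exact (sub_eq_zero.mp h).symm
  -- ## Step 1: p commutes with U, star U
  have hcommA : comm {a} = comm {u, star u} := by
    have h := congrArg comm ha
    rwa [comm_comm_comm, comm_comm_comm] at h
  have hpmemA : p ∈ comm {a} := by
    intro x hx
    rw [Set.mem_singleton_iff] at hx
    subst hx
    exact hpa.symm
  have hpU : u * p = p * u := (hcommA ▸ hpmemA) u (Set.mem_insert _ _)
  have hpUs : star u * p = p * star u :=
    (hcommA ▸ hpmemA) (star u) (Set.mem_insert_of_mem _ rfl)
  -- p ∈ M'' : commutes with everything in the commutant of {U, V, U*, V*}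
  have hpM : ∀ x ∈ comm {u, v, star u, star v}, x * p = p * x := by
    have h : p ∈ (M : Set (H →L[ℂ] H)) := hpMem
    rw [hMgen] at h
    exact h
  -- b commutes with everything in the commutant of {V, V*}
  have hbC : ∀ x ∈ comm {v, star v}, x * b = b * x := hb
  -- ## Step 2: commutation relations at the operator level
  have hμ1 : Complex.exp (2 * ↑π * Complex.I * ↑θ) = μf θ 1 := by
    rw [μf]
    congr 1
    push_cast
    ring
  have hUV : u * v = μf θ 1 • (v * u) := by rw [← hμ1]; exact hcomm
  have hVU : v * u = μf θ (-1) • (u * v) := by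
    rw [hUV, smul_smul, ← μf_add]
    norm_num [μf_zero]
  -- coercion facts
  have hcoe_mul : ∀ W W' : unitary (H →L[ℂ] H),
      ((W * W' : unitary (H →L[ℂ] H)) : H →L[ℂ] H) = (W : H →L[ℂ] H) * (W' : H →L[ℂ] H) :=
    fun _ _ => rfl
  have hcoe_one : ((1 : unitary (H →L[ℂ] H)) : H →L[ℂ] H) = 1 := rfl
  have hUinv_mul : ((U⁻¹ : unitary (H →L[ℂ] H)) : H →L[ℂ] H) * u = 1 := by
    rw [← hcoe_mul, inv_mul_cancel, hcoe_one]
  have hU_mul_inv : u * ((U⁻¹ : unitary (H →L[ℂ] H)) : H →L[ℂ] H) = 1 := by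
    rw [← hcoe_mul, mul_inv_cancel, hcoe_one]
  have hVinv_mul : ((V⁻¹ : unitary (H →L[ℂ] H)) : H →L[ℂ] H) * v = 1 := by
    rw [← hcoe_mul, inv_mul_cancel, hcoe_one]
  have hV_mul_inv : v * ((V⁻¹ : unitary (H →L[ℂ] H)) : H →L[ℂ] H) = 1 := by
    rw [← hcoe_mul, mul_inv_cancel, hcoe_one]
  have hstarU : star u = ((U⁻¹ : unitary (H →L[ℂ] H)) : H →L[ℂ] H) := by
    rw [← Unitary.coe_star, Unitary.star_eq_inv]
  have hstarV : star v = ((V⁻¹ : unitary (H →L[ℂ] H)) : H →L[ℂ] H) := by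
    rw [← Unitary.coe_star, Unitary.star_eq_inv]
  -- V U⁻¹ commutation
  have hVUi : v * ((U⁻¹ : unitary (H →L[ℂ] H)) : H →L[ℂ] H)
      = μf θ 1 • (((U⁻¹ : unitary (H →L[ℂ] H)) : H →L[ℂ] H) * v) := by
    set ui : H →L[ℂ] H := ((U⁻¹ : unitary (H →L[ℂ] H)) : H →L[ℂ] H) with hui
    have step : ui * (v * u) * ui = μf θ (-1) • (v * ui) := by
      rw [hVU, mul_smul_comm, smul_mul_assoc]
      congr 1
      rw [← mul_assoc ui u v, hUinv_mul, one_mul]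
    have step2 : ui * (v * u) * ui = ui * v := by
      rw [mul_assoc, mul_assoc, hU_mul_inv, mul_one]
    have h3 : ui * v = μf θ (-1) • (v * ui) := by rw [← step2, step]
    have h4 : μf θ 1 • (ui * v) = μf θ 1 • μf θ (-1) • (v * ui) := by rw [h3]
    rw [smul_smul, μf_mul_neg, one_smul] at h4
    exact h4.symm
  -- Lc : V * U^m = μ(-m) • (U^m * V)
  have Lc : ∀ m : ℤ, v * ((U ^ m : unitary (H →L[ℂ] H)) : H →L[ℂ] H)
      = μf θ (-m) • (((U ^ m : unitary (H →L[ℂ] H)) : H →L[ℂ] H) * v) := by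
    intro m
    induction m using Int.induction_on with
    | zero =>
      rw [zpow_zero, hcoe_one, mul_one, one_mul, neg_zero, μf_zero, one_smul]
    | succ k ih =>
      have hzp : (U ^ ((k : ℤ) + 1) : unitary (H →L[ℂ] H)) = U ^ (k : ℤ) * U := zpow_add_one U k
      rw [hzp, hcoe_mul, ← mul_assoc, ih, smul_mul_assoc, mul_assoc, hVU, mul_smul_comm,
        smul_smul, ← μf_add, mul_assoc]
      congr 2
      ring
    | pred k ih =>
      have hzp : (U ^ (-(k : ℤ) - 1) : unitary (H →L[ℂ] H)) = U ^ (-(k : ℤ)) * U⁻¹ :=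
        zpow_sub_one U (-(k : ℤ))
      rw [hzp, hcoe_mul, ← mul_assoc, ih, smul_mul_assoc, mul_assoc, hVUi, mul_smul_comm,
        smul_smul, ← μf_add, mul_assoc]
      congr 2
      ring
  -- Lc' : V⁻¹ * U^m = μ(m) • (U^m * V⁻¹)
  have Lc' : ∀ m : ℤ, ((V⁻¹ : unitary (H →L[ℂ] H)) : H →L[ℂ] H)
        * ((U ^ m : unitary (H →L[ℂ] H)) : H →L[ℂ] H)
      = μf θ m • (((U ^ m : unitary (H →L[ℂ] H)) : H →L[ℂ] H)
        * ((V⁻¹ : unitary (H →L[ℂ] H)) : H →L[ℂ] H)) := by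
    intro m
    have step : ((V⁻¹ : unitary (H →L[ℂ] H)) : H →L[ℂ] H)
          * (v * ((U ^ m : unitary (H →L[ℂ] H)) : H →L[ℂ] H))
          * ((V⁻¹ : unitary (H →L[ℂ] H)) : H →L[ℂ] H)
        = ((U ^ m : unitary (H →L[ℂ] H)) : H →L[ℂ] H)
          * ((V⁻¹ : unitary (H →L[ℂ] H)) : H →L[ℂ] H) := by
      rw [← mul_assoc _ v _, hVinv_mul, one_mul]
    have step2 : ((V⁻¹ : unitary (H →L[ℂ] H)) : H →L[ℂ] H)
          * (v * ((U ^ m : unitary (H →L[ℂ] H)) : H →L[ℂ] H))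
          * ((V⁻¹ : unitary (H →L[ℂ] H)) : H →L[ℂ] H)
        = μf θ (-m) • (((V⁻¹ : unitary (H →L[ℂ] H)) : H →L[ℂ] H)
          * ((U ^ m : unitary (H →L[ℂ] H)) : H →L[ℂ] H)) := by
      rw [Lc m, mul_smul_comm, smul_mul_assoc]
      congr 1
      rw [mul_assoc, mul_assoc, hV_mul_inv, mul_one]
    have h3 := step.symm.trans step2
    have h4 := congrArg (fun z => μf θ m • z) h3
    simp only [smul_smul, μf_mul_neg, one_smul] at h4
    exact h4.symm
  -- ## Step 3: action on the basis vectors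
  have hUe : ∀ m n : ℤ, u (e (m, n)) = e (m + 1, n) := by
    intro m n
    show u (((U ^ m * V ^ n : unitary (H →L[ℂ] H)) : H →L[ℂ] H) ξ)
      = ((U ^ (m + 1) * V ^ n : unitary (H →L[ℂ] H)) : H →L[ℂ] H) ξ
    rw [← ContinuousLinearMap.mul_apply, ← hcoe_mul]
    congr 2
    rw [← mul_assoc, ← zpow_one_add]
    congr 2
    ring
  have hUse : ∀ m n : ℤ, star u (e (m, n)) = e (m - 1, n) := by
    intro m n
    rw [hstarU]
    show ((U⁻¹ : unitary (H →L[ℂ] H)) : H →L[ℂ] H)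
        (((U ^ m * V ^ n : unitary (H →L[ℂ] H)) : H →L[ℂ] H) ξ)
      = ((U ^ (m - 1) * V ^ n : unitary (H →L[ℂ] H)) : H →L[ℂ] H) ξ
    rw [← ContinuousLinearMap.mul_apply, ← hcoe_mul]
    congr 2
    rw [← mul_assoc]
    congr 1
    rw [zpow_sub_one]
    exact ((Commute.refl U).zpow_right m).inv_left.eq
  have hVe : ∀ m n : ℤ, v (e (m, n)) = μf θ (-m) • e (m, n + 1) := by
    intro m n
    show v (((U ^ m * V ^ n : unitary (H →L[ℂ] H)) : H →L[ℂ] H) ξ)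
      = μf θ (-m) • ((U ^ m * V ^ (n + 1) : unitary (H →L[ℂ] H)) : H →L[ℂ] H) ξ
    rw [← ContinuousLinearMap.mul_apply, hcoe_mul, ← mul_assoc, Lc m, smul_mul_assoc,
      ContinuousLinearMap.smul_apply]
    congr 2
    rw [mul_assoc, hcoe_mul (U ^ m) (V ^ (n + 1))]
    congr 1
    rw [← hcoe_mul]
    congr 1
    rw [zpow_add_one]
    exact ((Commute.refl V).zpow_right n).eq
  have hVse : ∀ m n : ℤ, star v (e (m, n)) = μf θ m • e (m, n - 1) := by
    intro m n
    rw [hstarV]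
    show ((V⁻¹ : unitary (H →L[ℂ] H)) : H →L[ℂ] H)
        (((U ^ m * V ^ n : unitary (H →L[ℂ] H)) : H →L[ℂ] H) ξ)
      = μf θ m • ((U ^ m * V ^ (n - 1) : unitary (H →L[ℂ] H)) : H →L[ℂ] H) ξ
    rw [← ContinuousLinearMap.mul_apply, hcoe_mul, ← mul_assoc, Lc' m, smul_mul_assoc,
      ContinuousLinearMap.smul_apply]
    congr 2
    rw [mul_assoc, hcoe_mul (U ^ m) (V ^ (n - 1))]
    congr 1
    rw [← hcoe_mul]
    congr 1
    rw [zpow_sub_one]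
    exact ((Commute.refl V).zpow_right n).inv_left.eq
  -- ## Step 4: the Hilbert basis
  have hsp : ⊤ ≤ (Submodule.span ℂ (Set.range e)).topologicalClosure :=
    le_of_eq (Submodule.dense_iff_topologicalClosure_eq_top.mp htotal).symm
  set hbH : HilbertBasis (ℤ × ℤ) ℂ H := HilbertBasis.mk honb hsp with hhbH
  have hbHe : ∀ i, hbH i = e i := by
    intro i
    rw [hhbH, HilbertBasis.coe_mk]
  -- ## Step 5: three auxiliary unitaries
  -- D : diagonal
  obtain ⟨TD, hTDact, hTDinner⟩ := exists_basis_unitary hbH (Equiv.refl _)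
    (fun mn => μf θ mn.1) (fun mn => μf_norm θ mn.1)
  have hTDe : ∀ m n : ℤ, TD (e (m, n)) = μf θ m • e (m, n) := by
    intro m n
    have h := hTDact (m, n)
    rwa [hbHe, hbHe] at h
  -- R : phase-twisted shift in the first variable
  obtain ⟨TR, hTRact, hTRinner⟩ := exists_basis_unitary hbH
    (Equiv.prodCongr (Equiv.addRight (1 : ℤ)) (Equiv.refl ℤ))
    (fun mn => μf θ (-mn.2)) (fun mn => μf_norm θ (-mn.2))
  have hTRe : ∀ m n : ℤ, TR (e (m, n)) = μf θ (-n) • e (m + 1, n) := by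
    intro m n
    have h := hTRact (m, n)
    rwa [hbHe, hbHe] at h
  -- S : shift in the second variable
  obtain ⟨TS, hTSact, hTSinner⟩ := exists_basis_unitary hbH
    (Equiv.prodCongr (Equiv.refl ℤ) (Equiv.addRight (1 : ℤ)))
    (fun _ => (1 : ℂ)) (fun _ => norm_one)
  have hTSe : ∀ m n : ℤ, TS (e (m, n)) = e (m, n + 1) := by
    intro m n
    have h := hTSact (m, n)
    rwa [hbHe, hbHe, one_smul] at h
  -- equality of operators via their action on basis vectors
  have ext_e : ∀ {x y : H →L[ℂ] H}, (∀ m n : ℤ, x (e (m, n)) = y (e (m, n))) → x = y := by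
    intro x y hxy
    apply ContinuousLinearMap.ext_on htotal
    rintro - ⟨⟨m, n⟩, rfl⟩
    exact hxy m n
  -- memberships in the appropriate commutants
  have hTD_mem : TD ∈ comm {v, star v} := by
    rintro x (rfl | rfl)
    · apply ext_e
      intro m n
      simp only [ContinuousLinearMap.mul_apply, hTDe, hVe, map_smul, smul_smul]
      congr 1
      ring
    · apply ext_e
      intro m n
      simp only [ContinuousLinearMap.mul_apply, hTDe, hVse, map_smul, smul_smul]
  have hTR_mem : TR ∈ comm {u, v, star u, star v} := by
    rintro x (rfl | rfl | rfl | rfl)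
    · apply ext_e
      intro m n
      simp only [ContinuousLinearMap.mul_apply, hTRe, hUe, map_smul]
    · apply ext_e
      intro m n
      simp only [ContinuousLinearMap.mul_apply, hTRe, hVe, map_smul, smul_smul]
      congr 1
      rw [← μf_add, ← μf_add]
      congr 1
      ring
    · apply ext_e
      intro m n
      simp only [ContinuousLinearMap.mul_apply, hTRe, hUse, map_smul]
      have hidx : m + 1 - 1 = m - 1 + 1 := by ring
      rw [hidx]
    · apply ext_e
      intro m n
      simp only [ContinuousLinearMap.mul_apply, hTRe, hVse, map_smul, smul_smul]
      congr 1
      rw [← μf_add, ← μf_add]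
      congr 1
      ring
  have hTS_mem : TS ∈ comm {u, v, star u, star v} := by
    rintro x (rfl | rfl | rfl | rfl)
    · apply ext_e
      intro m n
      simp only [ContinuousLinearMap.mul_apply, hTSe, hUe]
    · apply ext_e
      intro m n
      simp only [ContinuousLinearMap.mul_apply, hTSe, hVe, map_smul]
    · apply ext_e
      intro m n
      simp only [ContinuousLinearMap.mul_apply, hTSe, hUse]
    · apply ext_e
      intro m n
      simp only [ContinuousLinearMap.mul_apply, hTSe, hVse, map_smul]
      have hidx : n + 1 - 1 = n - 1 + 1 := by ring
      rw [hidx]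
  have hTS_memV : TS ∈ comm {v, star v} := by
    rintro x (rfl | rfl)
    · exact hTS_mem v (by simp [Set.mem_insert_iff])
    · exact hTS_mem (star v) (by simp [Set.mem_insert_iff])
  have hTR_memV : TR ∈ comm {v, star v} := by
    rintro x (rfl | rfl)
    · exact hTR_mem v (by simp [Set.mem_insert_iff])
    · exact hTR_mem (star v) (by simp [Set.mem_insert_iff])
  -- the resulting commutation relations
  have hpTR : TR * p = p * TR := hpM TR hTR_mem
  have hpTS : TS * p = p * TS := hpM TS hTS_mem
  have hbTD : TD * b = b * TD := hbC TD hTD_mem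
  have hbTR : TR * b = b * TR := hbC TR hTR_memV
  have hbTS : TS * b = b * TS := hbC TS hTS_memV
  -- ## Step 6: matrix entries
  set P : ℤ → ℤ → ℤ → ℤ → ℂ := fun m n m' n' => ⟪e (m', n'), p (e (m, n))⟫_ℂ with hPd
  set B : ℤ → ℤ → ℤ → ℤ → ℂ := fun m n m' n' => ⟪e (m', n'), b (e (m, n))⟫_ℂ with hBd
  have hpsym : ∀ x y : H, ⟪p x, y⟫_ℂ = ⟪x, p y⟫_ℂ := by
    intro x y
    have hadj : ContinuousLinearMap.adjoint p = p := by
      rw [← ContinuousLinearMap.star_eq_adjoint]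
      exact hpSA.star_eq
    conv_lhs => rw [← hadj]
    exact ContinuousLinearMap.adjoint_inner_left p y x
  have hbsym : ∀ x y : H, ⟪b x, y⟫_ℂ = ⟪x, b y⟫_ℂ := by
    intro x y
    have hadj : ContinuousLinearMap.adjoint b = b := by
      rw [← ContinuousLinearMap.star_eq_adjoint]
      exact hbSA.star_eq
    conv_lhs => rw [← hadj]
    exact ContinuousLinearMap.adjoint_inner_left b y x
  have hinnU : ∀ x y : H, ⟪u x, u y⟫_ℂ = ⟪x, y⟫_ℂ := fun x y =>
    ContinuousLinearMap.inner_map_map_of_mem_unitary U.prop x y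
  have hswap : ∀ {T q : H →L[ℂ] H}, T * q = q * T → ∀ x : H, q (T x) = T (q x) := by
    intro T q h x
    have hx := ContinuousLinearMap.ext_iff.mp h x
    rw [ContinuousLinearMap.mul_apply, ContinuousLinearMap.mul_apply] at hx
    exact hx.symm
  -- p-relations
  have hP1 : ∀ m n m' n', P (m + 1) n (m' + 1) n' = P m n m' n' := by
    intro m n m' n'
    simp only [hPd]
    rw [← hUe m n, ← hUe m' n', hswap hpU (e (m, n))]
    exact hinnU _ _
  have hP2 : ∀ m n m' n', μf θ n' * (μf θ (-n) * P (m + 1) n (m' + 1) n') = P m n m' n' := by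
    intro m n m' n'
    simp only [hPd]
    have h0 : ⟪TR (e (m', n')), TR (p (e (m, n)))⟫_ℂ = ⟪e (m', n'), p (e (m, n))⟫_ℂ :=
      hTRinner _ _
    rw [← hswap hpTR (e (m, n))] at h0
    rw [hTRe, hTRe, inner_smul_left, map_smul, inner_smul_right, μf_conj, neg_neg] at h0
    exact h0
  have hP3 : ∀ m n m' n', P m (n + 1) m' (n' + 1) = P m n m' n' := by
    intro m n m' n'
    simp only [hPd]
    have h0 : ⟪TS (e (m', n')), TS (p (e (m, n)))⟫_ℂ = ⟪e (m', n'), p (e (m, n))⟫_ℂ :=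
      hTSinner _ _
    rw [← hswap hpTS (e (m, n))] at h0
    rw [hTSe, hTSe] at h0
    exact h0
  have hPsym : ∀ m n m' n', (starRingEnd ℂ) (P m' n' m n) = P m n m' n' := by
    intro m n m' n'
    simp only [hPd]
    rw [inner_conj_symm, hpsym]
  -- b-relations
  have hB1 : ∀ m n m' n', μf θ (-m') * (μf θ m * B m n m' n') = B m n m' n' := by
    intro m n m' n'
    simp only [hBd]
    have h0 : ⟪TD (e (m', n')), TD (b (e (m, n)))⟫_ℂ = ⟪e (m', n'), b (e (m, n))⟫_ℂ :=
      hTDinner _ _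
    rw [← hswap hbTD (e (m, n))] at h0
    rw [hTDe, hTDe, inner_smul_left, map_smul, inner_smul_right, μf_conj] at h0
    exact h0
  have hB3raw : ∀ m n m' n', μf θ n' * (μf θ (-n) * B (m + 1) n (m' + 1) n') = B m n m' n' := by
    intro m n m' n'
    simp only [hBd]
    have h0 : ⟪TR (e (m', n')), TR (b (e (m, n)))⟫_ℂ = ⟪e (m', n'), b (e (m, n))⟫_ℂ :=
      hTRinner _ _
    rw [← hswap hbTR (e (m, n))] at h0
    rw [hTRe, hTRe, inner_smul_left, map_smul, inner_smul_right, μf_conj, neg_neg] at h0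
    exact h0
  have hB2 : ∀ m n m' n', B m (n + 1) m' (n' + 1) = B m n m' n' := by
    intro m n m' n'
    simp only [hBd]
    have h0 : ⟪TS (e (m', n')), TS (b (e (m, n)))⟫_ℂ = ⟪e (m', n'), b (e (m, n))⟫_ℂ :=
      hTSinner _ _
    rw [← hswap hbTS (e (m, n))] at h0
    rw [hTSe, hTSe] at h0
    exact h0
  have hBsym : ∀ m n m' n', (starRingEnd ℂ) (B m' n' m n) = B m n m' n' := by
    intro m n m' n'
    simp only [hBd]
    rw [inner_conj_symm, hbsym]
  -- off-diagonal vanishing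
  have hPoff : ∀ m n m' n', n ≠ n' → P m n m' n' = 0 := by
    intro m n m' n' hne
    have h0 := hP2 m n m' n'
    rw [hP1 m n m' n'] at h0
    rw [← mul_assoc, ← μf_add] at h0
    have h1 : (μf θ (n' + -n) - 1) * P m n m' n' = 0 := by
      rw [sub_mul, one_mul, h0, sub_self]
    rcases mul_eq_zero.mp h1 with h | h
    · exfalso
      exact μf_ne_one hθ (by omega : n' + -n ≠ 0) (by linear_combination h)
    · exact h
  have hBoff : ∀ m n m' n', m ≠ m' → B m n m' n' = 0 := by
    intro m n m' n' hne
    have h0 := hB1 m n m' n'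
    rw [← mul_assoc, ← μf_add] at h0
    have h1 : (μf θ (-m' + m) - 1) * B m n m' n' = 0 := by
      rw [sub_mul, one_mul, h0, sub_self]
    rcases mul_eq_zero.mp h1 with h | h
    · exfalso
      exact μf_ne_one hθ (by omega : -m' + m ≠ 0) (by linear_combination h)
    · exact h
  -- B-shift in the first variable, with phase
  have hB3 : ∀ m n m' n', B (m + 1) n (m' + 1) n' = μf θ (n - n') * B m n m' n' := by
    intro m n m' n'
    have h0 := hB3raw m n m' n'
    have h2 : μf θ (n - n') * B m n m' n'
        = μf θ (n - n') * (μf θ n' * (μf θ (-n) * B (m + 1) n (m' + 1) n')) := by rw [h0]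
    rw [← mul_assoc, ← μf_add, ← mul_assoc, ← μf_add,
      show n - n' + n' + -n = 0 by ring, μf_zero, one_mul] at h2
    exact h2.symm
  -- ## Step 7: shift lemmas
  have hPshiftm : ∀ n n' k d, P d n (d + k) n' = P 0 n k n' := by
    intro n n' k d
    have key : ∀ t : ℤ, (fun t => P t n (t + k) n') (t + 1) = (fun t => P t n (t + k) n') t := by
      intro t
      simp only
      have h := hP1 t n (t + k) n'
      rwa [show t + k + 1 = t + 1 + k by ring] at h
    have h := int_invariant (F := fun t => P t n (t + k) n') key d
    simpa using h
  have hPshiftn : ∀ m m' k d, P m d m' (d + k) = P m 0 m' k := by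
    intro m m' k d
    have key : ∀ t : ℤ, (fun t => P m t m' (t + k)) (t + 1) = (fun t => P m t m' (t + k)) t := by
      intro t
      simp only
      have h := hP3 m t m' (t + k)
      rwa [show t + k + 1 = t + 1 + k by ring] at h
    have h := int_invariant (F := fun t => P m t m' (t + k)) key d
    simpa using h
  have hPdiag : ∀ m n m', P m n m' n = P 0 0 (m' - m) 0 := by
    intro m n m'
    have h1 := hPshiftm n n (m' - m) m
    rw [show m + (m' - m) = m' by ring] at h1
    have h2 := hPshiftn 0 (m' - m) 0 n
    rw [add_zero] at h2
    rw [h1, h2]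
  have hBshiftm : ∀ n n' k d, B d n (d + k) n' = μf θ ((n - n') * d) * B 0 n k n' := by
    intro n n' k d
    have key : ∀ t : ℤ, (fun t => B t n (t + k) n') (t + 1)
        = μf θ (n - n') * (fun t => B t n (t + k) n') t := by
      intro t
      simp only
      have h := hB3 t n (t + k) n'
      rwa [show t + k + 1 = t + 1 + k by ring] at h
    have h := int_shift_mu θ (s := n - n') (F := fun t => B t n (t + k) n') key d
    simpa using h
  have hBshiftn : ∀ m m' k d, B m d m' (d + k) = B m 0 m' k := by
    intro m m' k d
    have key : ∀ t : ℤ, (fun t => B m t m' (t + k)) (t + 1) = (fun t => B m t m' (t + k)) t := by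
      intro t
      simp only
      have h := hB2 m t m' (t + k)
      rwa [show t + k + 1 = t + 1 + k by ring] at h
    have h := int_invariant (F := fun t => B m t m' (t + k)) key d
    simpa using h
  have hBdiag : ∀ m n n', B m n m n' = μf θ ((n - n') * m) * B 0 0 0 (n' - n) := by
    intro m n n'
    have h1 := hBshiftm n n' 0 m
    rw [add_zero] at h1
    have h2 := hBshiftn 0 0 (n' - n) n
    rw [show n + (n' - n) = n' by ring] at h2
    rw [h1, h2]
  -- ## Step 8: the key mixed relation from p*b = b*p
  have hpb' : ∀ x : H, p (b x) = b (p x) := by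
    intro x
    have hx := ContinuousLinearMap.ext_iff.mp hpb x
    rw [ContinuousLinearMap.mul_apply, ContinuousLinearMap.mul_apply] at hx
    exact hx
  have hE : ∀ m n m' n',
      (starRingEnd ℂ) (P m' n' m n') * B m n m n'
        = (starRingEnd ℂ) (B m' n' m' n) * P m n m' n := by
    intro m n m' n'
    have hLHS : ⟪e (m', n'), p (b (e (m, n)))⟫_ℂ = (starRingEnd ℂ) (P m' n' m n') * B m n m n' := by
      rw [← hpsym (e (m', n')) (b (e (m, n)))]
      rw [← hbH.tsum_inner_mul_inner (p (e (m', n'))) (b (e (m, n)))]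
      rw [tsum_eq_single ((m, n') : ℤ × ℤ) ?_]
      · rw [hbHe]
        simp only [hPd, hBd]
        congr 1
        exact (inner_conj_symm (p (e (m', n'))) (e (m, n'))).symm
      · rintro ⟨m₁, n₁⟩ hne
        rw [hbHe]
        by_cases hcase : n₁ = n'
        · subst hcase
          have hm : m ≠ m₁ := by
            intro hc
            subst hc
            exact hne rfl
          have h0 := hBoff m n m₁ n₁ hm
          simp only [hBd] at h0
          rw [h0, mul_zero]
        · have h0 := hPoff m₁ n₁ m' n' hcase
          simp only [hPd] at h0
          rw [hpsym, h0, zero_mul]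
    have hRHS : ⟪e (m', n'), b (p (e (m, n)))⟫_ℂ
        = (starRingEnd ℂ) (B m' n' m' n) * P m n m' n := by
      rw [← hbsym (e (m', n')) (p (e (m, n)))]
      rw [← hbH.tsum_inner_mul_inner (b (e (m', n'))) (p (e (m, n)))]
      rw [tsum_eq_single ((m', n) : ℤ × ℤ) ?_]
      · rw [hbHe]
        simp only [hPd, hBd]
        congr 1
        exact (inner_conj_symm (b (e (m', n'))) (e (m', n))).symm
      · rintro ⟨m₁, n₁⟩ hne
        rw [hbHe]
        by_cases hcase : n₁ = n
        · subst hcase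
          have hm : m₁ ≠ m' := by
            intro hc
            subst hc
            exact hne rfl
          have h0 := hBoff m₁ n₁ m' n' hm
          simp only [hBd] at h0
          rw [hbsym, h0, zero_mul]
        · have h0 := hPoff m n m₁ n₁ (fun hcc => hcase hcc.symm)
          simp only [hPd] at h0
          rw [h0, mul_zero]
    rw [← hLHS, ← hRHS, hpb']
  -- ## Step 9: b non-scalar gives a nonzero off-diagonal coefficient
  have hγ : ∃ j : ℤ, j ≠ 0 ∧ B 0 0 0 j ≠ 0 := by
    by_contra hcon
    push_neg at hcon
    apply hbns
    refine ⟨B 0 0 0 0, ?_⟩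
    apply ext_of_inner_basis hbH
    rintro ⟨m, n⟩ ⟨m', n'⟩
    rw [hbHe, hbHe]
    rw [ContinuousLinearMap.smul_apply, ContinuousLinearMap.one_apply, inner_smul_right,
      orthonormal_iff_ite.mp honb (m', n') (m, n)]
    by_cases hm : m = m'
    · subst hm
      by_cases hn : n = n'
      · subst hn
        have hd := hBdiag m n n
        rw [sub_self, zero_mul, μf_zero, one_mul] at hd
        simp only [hBd] at hd ⊢
        rw [hd]
        simp
      · have hd := hBdiag m n n'
        rw [hcon (n' - n) (by omega), mul_zero] at hd
        simp only [hBd] at hd ⊢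
        rw [hd, if_neg (show ((m, n') : ℤ × ℤ) ≠ (m, n) from
          fun hc => hn (congrArg Prod.snd hc).symm), mul_zero]
    · have h0 := hBoff m n m' n' (fun hc => hm hc)
      simp only [hBd] at h0 ⊢
      rw [h0, if_neg (show ((m', n') : ℤ × ℤ) ≠ (m, n) from
        fun hc => hm (congrArg Prod.fst hc).symm), mul_zero]
  obtain ⟨j, hj0, hγj⟩ := hγ
  -- ## Step 10: the off-diagonal entries of p vanish
  have hh0 : ∀ k : ℤ, k ≠ 0 → P 0 0 k 0 = 0 := by
    intro k hk
    have hEk := hE 0 0 k j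
    have hL : (starRingEnd ℂ) (P k j 0 j) = P 0 0 k 0 := by
      rw [hPdiag k j 0, ← hPdiag k 0 0]
      exact hPsym 0 0 k 0
    have hR : (starRingEnd ℂ) (B k j k 0) = μf θ (-(k * j)) * B 0 0 0 j := by
      rw [hBsym k 0 k j, hBdiag k 0 j]
      rw [show (0 - j) * k = -(k * j) by ring, sub_zero]
    rw [hL, hR] at hEk
    -- hEk : P 0 0 k 0 * B 0 0 0 j = μ(-(kj)) * B 0 0 0 j * P 0 0 k 0
    have heq : P 0 0 k 0 * B 0 0 0 j * (1 - μf θ (-(k * j))) = 0 := by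
      linear_combination hEk
    rcases mul_eq_zero.mp heq with h | h
    · rcases mul_eq_zero.mp h with h' | h'
      · exact h'
      · exact absurd h' hγj
    · exfalso
      have hmu : μf θ (-(k * j)) = 1 := by linear_combination -h
      exact μf_ne_one hθ (neg_ne_zero.mpr (mul_ne_zero hk hj0)) hmu
  -- ## Step 11: p is the scalar P 0 0 0 0
  have hscal : p = P 0 0 0 0 • (1 : H →L[ℂ] H) := by
    apply ext_of_inner_basis hbH
    rintro ⟨m, n⟩ ⟨m', n'⟩
    rw [hbHe, hbHe]
    rw [ContinuousLinearMap.smul_apply, ContinuousLinearMap.one_apply, inner_smul_right,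
      orthonormal_iff_ite.mp honb (m', n') (m, n)]
    by_cases hn : n = n'
    · subst hn
      by_cases hm : m = m'
      · subst hm
        have hd := hPdiag m n m
        rw [sub_self] at hd
        simp only [hPd] at hd ⊢
        rw [hd]
        simp
      · have hd := hPdiag m n m'
        rw [hh0 (m' - m) (by omega)] at hd
        simp only [hPd] at hd ⊢
        rw [hd, if_neg (show ((m', n) : ℤ × ℤ) ≠ (m, n) from
          fun hc => hm (congrArg Prod.fst hc).symm), mul_zero]
    · have h0 := hPoff m n m' n' hn
      simp only [hPd] at h0 ⊢
      rw [h0, if_neg (show ((m', n') : ℤ × ℤ) ≠ (m, n) from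
        fun hc => hn (congrArg Prod.snd hc).symm), mul_zero]
  -- ## Step 12: conclusion
  have hξne : ξ ≠ 0 := by
    intro hc
    rw [hc, norm_zero] at hξ
    norm_num at hξ
  have hidem2 : (P 0 0 0 0 * P 0 0 0 0) • (1 : H →L[ℂ] H) = P 0 0 0 0 • 1 := by
    have h := hpidem
    rw [hscal, smul_mul_smul_comm, one_mul] at h
    exact h
  have happ := ContinuousLinearMap.ext_iff.mp hidem2 ξ
  rw [ContinuousLinearMap.smul_apply, ContinuousLinearMap.smul_apply,
    ContinuousLinearMap.one_apply] at happ
  have hc2 : P 0 0 0 0 * P 0 0 0 0 = P 0 0 0 0 :=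
    smul_left_injective ℂ hξne happ
  have hcases : P 0 0 0 0 = 0 ∨ P 0 0 0 0 - 1 = 0 := by
    apply mul_eq_zero.mp
    linear_combination hc2
  rcases hcases with h | h
  · left
    rw [hscal, h, zero_smul]
  · right
    rw [hscal, sub_eq_zero.mp h, one_smul]
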